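/- arXiv:2312.10684 — 3 statements merged into one kernel-verified Lean document; each statement's English description precedes it below -/
import Mathlib

section
/- (Theorem 1, single-output immersion) Let A ∈ ℝ^{n×n}, B ∈ ℝ^{n×p}, C ∈ ℝ^{n×n} symmetric, d ∈ ℝ^n, let u : ℝ → ℝ^p be a function, and let x : ℝ → ℝ^n be differentiable with ẋ(t) = A x(t) + B u(t) for all t ∈ ℝ; set y(t) := ½ x(t)ᵀ C x(t) + dᵀ x(t). Suppose m ≥ 1 and α_0, …, α_{m-1} ∈ ℝ satisfy L_A^{[m]}(C) = Σ_{k=0}^{m-1} α_k L_A^{[k]}(C). Define ξ_k(t) := ½ x(t)ᵀ L_A^{[k]}(C) x(t) and z(t) := (ξ_{m-1}(t), ξ_{m-2}(t), …, ξ_0(t), x(t)) ∈ ℝ^{m+n}. For v ∈ ℝ^p define 𝒜(v) ∈ ℝ^{(m+n)×(m+n)} blockwise by: the top-left m×m block has first row (α_{m-1}, α_{m-2}, …, α_0), ones on the subdiagonal, and zeros elsewhere; the j-th row (j = 1, …, m) of the top-right m×n block is (Bv)ᵀ L_A^{[m-j]}(C); the bottom-left n×m block is zero; the bottom-right n×n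 block is A. Define ℬ := [0_{m×p}; B] ∈ ℝ^{(m+n)×p} and 𝒞 := (0, …, 0, 1, dᵀ) ∈ ℝ^{1×(m+n)}. Then z is differentiable with ż(t) = 𝒜(u(t)) z(t) + ℬ u(t) and y(t) = 𝒞 z(t) for all t ∈ ℝ. -/
open Matrix
open scoped Kronecker

namespace Quad

/-- Index set for the lower-triangular entries (pairs `(i,j)` with `j ≤ i`). -/
abbrev SymIdx (n : ℕ) := {p : Fin n × Fin n // p.2 ≤ p.1}

/-- Vectorization of a matrix (stacking columns): `vec M (j, i) = M i j`. -/
def vec {n m : ℕ} (M : Matrix (Fin n) (Fin m) ℝ) : Fin m × Fin n → ℝ :=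
  fun p => M p.2 p.1

/-- Half-vectorization of a (symmetric) matrix. -/
def vech {n : ℕ} (M : Matrix (Fin n) (Fin n) ℝ) : SymIdx n → ℝ :=
  fun p => M p.1.1 p.1.2

/-- The duplication matrix `D_n`. -/
def dup (n : ℕ) : Matrix (Fin n × Fin n) (SymIdx n) ℝ :=
  Matrix.of fun r c => if r = c.1 ∨ r = (c.1.2, c.1.1) then 1 else 0

/-- The Moore–Penrose inverse `D_n⁺ = (D_nᵀ D_n)⁻¹ D_nᵀ`. -/
noncomputable def dupPinv (n : ℕ) : Matrix (SymIdx n) (Fin n × Fin n) ℝ :=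
  ((dup n)ᵀ * dup n)⁻¹ * (dup n)ᵀ

/-- Kronecker sum `A ⊕ B = A ⊗ I + I ⊗ B`. -/
def kronSum {n m : ℕ} (A : Matrix (Fin n) (Fin n) ℝ) (B : Matrix (Fin m) (Fin m) ℝ) :
    Matrix (Fin n × Fin m) (Fin n × Fin m) ℝ :=
  A ⊗ₖ (1 : Matrix (Fin m) (Fin m) ℝ) + (1 : Matrix (Fin n) (Fin n) ℝ) ⊗ₖ B

/-- Kronecker product of two (column) vectors. -/
def kronVec {a b : ℕ} (u : Fin a → ℝ) (v : Fin b → ℝ) : Fin a × Fin b → ℝ :=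
  fun p => u p.1 * v p.2

/-- The Lyapunov operator `L_A(X) = X A + Aᵀ X`. -/
def lyap {n : ℕ} (A X : Matrix (Fin n) (Fin n) ℝ) : Matrix (Fin n) (Fin n) ℝ :=
  X * A + Aᵀ * X

/-- `w ⊗ I_n` for a column vector `w ∈ ℝⁿ`, an `n² × n` matrix. -/
def vecKronId {n : ℕ} (w : Fin n → ℝ) : Matrix (Fin n × Fin n) (Fin n) ℝ :=
  Matrix.of fun pr j => w pr.1 * (if pr.2 = j then 1 else 0)

/-- `I_n ⊗ w` for a column vector `w ∈ ℝⁿ`, an `n² × n` matrix. -/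
def idKronVec {n : ℕ} (w : Fin n → ℝ) : Matrix (Fin n × Fin n) (Fin n) ℝ :=
  Matrix.of fun pr j => (if pr.1 = j then 1 else 0) * w pr.2

/-- `Ā := D_nᵀ (A ⊕ A) (D_n⁺)ᵀ`. -/
noncomputable def kronAbar {n : ℕ} (A : Matrix (Fin n) (Fin n) ℝ) :
    Matrix (SymIdx n) (SymIdx n) ℝ :=
  (dup n)ᵀ * kronSum A A * (dupPinv n)ᵀ

/-- `P` is a permutation matrix. -/
def IsPermMatrix {s : ℕ} (P : Matrix (Fin s) (Fin s) ℝ) : Prop :=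
  ∃ σ : Equiv.Perm (Fin s), ∀ i j, P i j = if i = σ j then 1 else 0

/-- Identification of `Fin b ⊕ Fin (a - b)` with `Fin a` used for vertical stacking. -/
def stackEquiv {a b : ℕ} (h : b ≤ a) : Fin b ⊕ Fin (a - b) ≃ Fin a :=
  finSumFinEquiv.trans (finCongr (Nat.add_sub_cancel' h))


lemma lyap_symm {n : ℕ} {A C : Matrix (Fin n) (Fin n) ℝ} (hC : C.IsSymm) (k : ℕ) :
    ((lyap A)^[k] C).IsSymm := by
  induction k with
  | zero => exact hC
  | succ k ih =>
    rw [Function.iterate_succ_apply']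
    unfold Matrix.IsSymm lyap at *
    simp [transpose_add, transpose_mul, ih, add_comm]

lemma dot_symm_cross {n : ℕ} {P : Matrix (Fin n) (Fin n) ℝ} (hP : P.IsSymm)
    (a b : Fin n → ℝ) : a ⬝ᵥ P.mulVec b = b ⬝ᵥ P.mulVec a := by
  rw [dotProduct_mulVec, ← vecMul_transpose, hP.eq, dotProduct_comm]

lemma hasDerivAt_quad {n : ℕ} (P : Matrix (Fin n) (Fin n) ℝ) {x : ℝ → Fin n → ℝ}
    {x' : Fin n → ℝ} {t : ℝ} (hx : HasDerivAt x x' t) :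
    HasDerivAt (fun s => x s ⬝ᵥ P.mulVec (x s))
      (x' ⬝ᵥ P.mulVec (x t) + x t ⬝ᵥ P.mulVec x') t := by
  have hxi : ∀ i, HasDerivAt (fun s => x s i) (x' i) t := fun i => (hasDerivAt_pi.mp hx) i
  have H : HasDerivAt (fun s => ∑ i, ∑ j, x s i * (P i j * x s j))
      (∑ i, ∑ j, (x' i * (P i j * x t j) + x t i * (P i j * x' j))) t :=
    HasDerivAt.fun_sum fun i _ => HasDerivAt.fun_sum fun j _ =>
      (hxi i).mul ((hxi j).const_mul (P i j))
  convert H using 1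
  · funext s; simp [dotProduct, mulVec, Finset.mul_sum]
  · simp [dotProduct, mulVec, Finset.mul_sum, ← Finset.sum_add_distrib]

lemma hasDerivAt_xi {n p : ℕ} {A : Matrix (Fin n) (Fin n) ℝ} {B : Matrix (Fin n) (Fin p) ℝ}
    {C : Matrix (Fin n) (Fin n) ℝ} (hC : C.IsSymm) {x : ℝ → Fin n → ℝ} {u : ℝ → Fin p → ℝ}
    {t : ℝ} (hx : HasDerivAt x (A.mulVec (x t) + B.mulVec (u t)) t) (k : ℕ) :
    HasDerivAt (fun s => (1 / 2 : ℝ) * (x s ⬝ᵥ ((lyap A)^[k] C).mulVec (x s)))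
      ((1 / 2 : ℝ) * (x t ⬝ᵥ ((lyap A)^[k + 1] C).mulVec (x t)) +
        (B.mulVec (u t)) ⬝ᵥ ((lyap A)^[k] C).mulVec (x t)) t := by
  set P := (lyap A)^[k] C with hPdef
  have hP : P.IsSymm := lyap_symm hC k
  have H := (hasDerivAt_quad P hx).const_mul (1 / 2 : ℝ)
  convert H using 1
  case e'_4 => rfl
  case e'_5 => rfl
  rw [Function.iterate_succ_apply', ← hPdef]
  show (1/2 : ℝ) * (x t ⬝ᵥ (lyap A P) *ᵥ x t) + _ = _
  unfold lyap
  have h1 : x t ⬝ᵥ (Aᵀ * P) *ᵥ x t = (A *ᵥ x t) ⬝ᵥ P *ᵥ x t := by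
    rw [← mulVec_mulVec, dotProduct_mulVec (x t) Aᵀ, vecMul_transpose]
  have h2 : (A *ᵥ x t) ⬝ᵥ P *ᵥ x t = x t ⬝ᵥ P *ᵥ (A *ᵥ x t) := dot_symm_cross hP _ _
  have h3 : x t ⬝ᵥ P *ᵥ (B *ᵥ u t) = (B *ᵥ u t) ⬝ᵥ P *ᵥ x t := dot_symm_cross hP _ _
  simp only [add_mulVec, dotProduct_add, mulVec_add, add_dotProduct, ← mulVec_mulVec] at *
  rw [h1, h2]
  ring_nf
  rw [h3]
  ring


lemma mulVec_finset_sum {n : ℕ} {ι : Type*} (s : Finset ι) (M : ι → Matrix (Fin n) (Fin n) ℝ)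
    (v : Fin n → ℝ) : (∑ k ∈ s, M k) *ᵥ v = ∑ k ∈ s, M k *ᵥ v := by
  induction s using Finset.cons_induction with
  | empty => simp
  | cons a s ha ih => simp [Finset.sum_cons, Matrix.add_mulVec, ih]

lemma dot_finset_sum {n : ℕ} {ι : Type*} (s : Finset ι) (w : ι → Fin n → ℝ)
    (v : Fin n → ℝ) : v ⬝ᵥ (∑ k ∈ s, w k) = ∑ k ∈ s, v ⬝ᵥ w k := by
  induction s using Finset.cons_induction with
  | empty => simp
  | cons a s ha ih => simp [Finset.sum_cons, dotProduct_add, ih]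

/-- Theorem 1, single-output immersion. -/
theorem single_output_immersion {n p m : ℕ} (hm : 1 ≤ m)
    (A : Matrix (Fin n) (Fin n) ℝ) (B : Matrix (Fin n) (Fin p) ℝ)
    (C : Matrix (Fin n) (Fin n) ℝ) (hC : C.IsSymm) (d : Fin n → ℝ)
    (u : ℝ → Fin p → ℝ) (x : ℝ → Fin n → ℝ)
    (hx : ∀ t, HasDerivAt x (A.mulVec (x t) + B.mulVec (u t)) t)
    (y : ℝ → ℝ)
    (hy : ∀ t, y t = (1 / 2 : ℝ) * (x t ⬝ᵥ C.mulVec (x t)) + d ⬝ᵥ x t)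
    (α : ℕ → ℝ)
    (hα : (lyap A)^[m] C = ∑ k ∈ Finset.range m, α k • (lyap A)^[k] C)
    (ξ : ℕ → ℝ → ℝ)
    (hξ : ∀ k t, ξ k t = (1 / 2 : ℝ) * (x t ⬝ᵥ ((lyap A)^[k] C).mulVec (x t)))
    (z : ℝ → Fin m ⊕ Fin n → ℝ)
    (hz : ∀ t, z t = Sum.elim (fun j : Fin m => ξ (m - 1 - (j : ℕ)) t) (x t))
    (𝒜 : (Fin p → ℝ) → Matrix (Fin m ⊕ Fin n) (Fin m ⊕ Fin n) ℝ)
    (h𝒜 : ∀ v, 𝒜 v = Matrix.fromBlocks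
      (Matrix.of fun i j : Fin m =>
        if (i : ℕ) = 0 then α (m - 1 - (j : ℕ))
        else if (i : ℕ) = (j : ℕ) + 1 then 1 else 0)
      (Matrix.of fun (i : Fin m) (j : Fin n) =>
        Matrix.vecMul (B.mulVec v) ((lyap A)^[m - 1 - (i : ℕ)] C) j)
      (0 : Matrix (Fin n) (Fin m) ℝ) A)
    (ℬ : Matrix (Fin m ⊕ Fin n) (Fin p) ℝ)
    (hℬ : ℬ = Matrix.fromRows (0 : Matrix (Fin m) (Fin p) ℝ) B)
    (𝒞 : Fin m ⊕ Fin n → ℝ)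
    (h𝒞 : 𝒞 = Sum.elim (fun j : Fin m => if (j : ℕ) = m - 1 then (1 : ℝ) else 0) d) :
    ∀ t : ℝ, HasDerivAt z ((𝒜 (u t)).mulVec (z t) + ℬ.mulVec (u t)) t ∧
      y t = 𝒞 ⬝ᵥ z t := by
  have hz' : z = fun t => Sum.elim (fun j : Fin m => ξ (m - 1 - (j : ℕ)) t) (x t) := funext hz
  have hξ' : ξ = fun k t => (1 / 2 : ℝ) * (x t ⬝ᵥ ((lyap A)^[k] C).mulVec (x t)) :=
    funext fun k => funext (hξ k)
  have hy' : y = fun t => (1 / 2 : ℝ) * (x t ⬝ᵥ C.mulVec (x t)) + d ⬝ᵥ x t := funext hy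
  subst hz' hξ' hy' hℬ h𝒞
  have hm1 : m - 1 < m := by omega
  intro t
  set a : Fin m → ℝ :=
    fun j : Fin m => (1 / 2 : ℝ) * (x t ⬝ᵥ ((lyap A)^[m - 1 - (j : ℕ)] C).mulVec (x t)) with ha
  set TL : Matrix (Fin m) (Fin m) ℝ := Matrix.of fun i j : Fin m =>
      if (i : ℕ) = 0 then α (m - 1 - (j : ℕ))
      else if (i : ℕ) = (j : ℕ) + 1 then 1 else 0 with hTL
  constructor
  · -- derivative
    rw [h𝒜, fromBlocks_mulVec, fromRows_mulVec]
    simp only [Sum.elim_comp_inl, Sum.elim_comp_inr, Matrix.zero_mulVec, zero_add]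
    apply hasDerivAt_pi.mpr
    rintro (i | i)
    · -- top block
      have H := hasDerivAt_xi hC (hx t) (m - 1 - (i : ℕ))
      convert H using 1
      case e'_4 => rfl
      case e'_5 => rfl
      case e'_8 => rfl
      simp only [Pi.add_apply, Sum.elim_inl, Pi.zero_apply, add_zero]
      have hsnd : ((Matrix.of fun (i : Fin m) (j : Fin n) =>
            Matrix.vecMul (B.mulVec (u t)) ((lyap A)^[m - 1 - (i : ℕ)] C) j) *ᵥ (x t)) i
          = (B.mulVec (u t)) ⬝ᵥ ((lyap A)^[m - 1 - (i : ℕ)] C).mulVec (x t) := by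
        rw [dotProduct_mulVec]
        simp [mulVec, dotProduct]
      rw [hsnd]
      rcases Nat.eq_zero_or_pos (i : ℕ) with h0 | hpos
      · -- first row
        have hmm : m - 1 - (i : ℕ) + 1 = m := by omega
        rw [hmm]
        have key : (TL *ᵥ a) i = (1/2:ℝ) * (x t ⬝ᵥ ((lyap A)^[m] C) *ᵥ x t) := by
          have hrow : (TL *ᵥ a) i = ∑ j : Fin m, α (m - 1 - (j : ℕ)) * a j := by
            simp [mulVec, dotProduct, hTL, h0]
          have hfin := Fin.sum_univ_eq_sum_range
            (fun j => α (m - 1 - j) * ((1/2:ℝ) * (x t ⬝ᵥ ((lyap A)^[m - 1 - j] C) *ᵥ x t))) m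
          have hrefl := Finset.sum_range_reflect
            (fun k => α k * ((1/2:ℝ) * (x t ⬝ᵥ ((lyap A)^[k] C) *ᵥ x t))) m
          have hterm : x t ⬝ᵥ (∑ k ∈ Finset.range m, α k • (lyap A)^[k] C) *ᵥ x t
              = ∑ k ∈ Finset.range m, α k * (x t ⬝ᵥ ((lyap A)^[k] C) *ᵥ x t) := by
            rw [mulVec_finset_sum, dot_finset_sum]
            congr 1; funext k
            rw [smul_mulVec, dotProduct_smul, smul_eq_mul]
          rw [hrow, hα]
          calc ∑ j : Fin m, α (m - 1 - (j : ℕ)) * a j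
              = ∑ k ∈ Finset.range m, α k * ((1/2:ℝ) * (x t ⬝ᵥ ((lyap A)^[k] C) *ᵥ x t)) := by
                rw [← hrefl, ← hfin]
            _ = (1/2:ℝ) * (x t ⬝ᵥ (∑ k ∈ Finset.range m, α k • (lyap A)^[k] C) *ᵥ x t) := by
                rw [hterm, Finset.mul_sum]; congr 1; funext k; ring
        rw [key]
      · -- subdiagonal rows
        obtain ⟨i', hi'⟩ : ∃ i', (i : ℕ) = i' + 1 := ⟨(i:ℕ) - 1, by omega⟩
        have hlt : i' < m := by omega
        have hidx : m - 1 - (i : ℕ) + 1 = m - 1 - i' := by omega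
        rw [hidx]
        have key : (TL *ᵥ a) i = a ⟨i', hlt⟩ := by
          have : (TL *ᵥ a) i = ∑ j : Fin m, TL i j * a j := by
            simp [mulVec, dotProduct]
          rw [this, Finset.sum_eq_single (⟨i', hlt⟩ : Fin m)]
          · simp [hTL, hi']
          · intro b _ hb
            have hbne : (i : ℕ) ≠ (b : ℕ) + 1 := by
              intro hc; apply hb; apply Fin.ext; show (b : ℕ) = i'; omega
            simp only [hTL, Matrix.of_apply]
            rw [if_neg (by omega), if_neg hbne, zero_mul]
          · simp
        rw [key]
    · -- bottom block
      have H := (hasDerivAt_pi.mp (hx t)) i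
      convert H using 1
      case e'_8 => rfl
      case e'_9 => simp
  · -- output equation
    rw [sumElim_dotProduct_sumElim]
    have hsum : (fun j : Fin m => if (j : ℕ) = m - 1 then (1:ℝ) else 0) ⬝ᵥ a
        = (1/2:ℝ) * (x t ⬝ᵥ C.mulVec (x t)) := by
      show (∑ j : Fin m, (if (j : ℕ) = m - 1 then (1:ℝ) else 0) * a j) = _
      rw [Finset.sum_eq_single (⟨m - 1, hm1⟩ : Fin m)]
      · simp [ha]
      · intro b _ hb
        have hbn : (b : ℕ) ≠ m - 1 := by
          intro hc; apply hb; apply Fin.ext; simpa using hc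
        simp [hbn]
      · simp
    rw [hsum]

end Quad
end

section
/- Let A ∈ ℝ^{n×n}, B ∈ ℝ^{n×p}, let u : ℝ → ℝ^p be a function, and let x : ℝ → ℝ^n be differentiable with ẋ(t) = A x(t) + B u(t) for all t ∈ ℝ. Then t ↦ x(t) ⊗ x(t) is differentiable and, for every t, d/dt (x(t) ⊗ x(t)) = (A ⊕ A)(x(t) ⊗ x(t)) + ((B u(t)) ⊗ I_n + I_n ⊗ (B u(t))) x(t). -/
open Matrix
open scoped Kronecker

namespace Quad

/-- along `ẋ = Ax + Bu`,
`d/dt (x ⊗ x) = (A ⊕ A)(x ⊗ x) + ((Bu) ⊗ I_n + I_n ⊗ (Bu)) x`. -/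
theorem hasDerivAt_kron_self {n p : ℕ}
    (A : Matrix (Fin n) (Fin n) ℝ) (B : Matrix (Fin n) (Fin p) ℝ)
    (u : ℝ → Fin p → ℝ) (x : ℝ → Fin n → ℝ)
    (hx : ∀ t, HasDerivAt x (A.mulVec (x t) + B.mulVec (u t)) t) :
    ∀ t : ℝ, HasDerivAt (fun s => kronVec (x s) (x s))
      ((kronSum A A).mulVec (kronVec (x t) (x t)) +
        (vecKronId (B.mulVec (u t)) + idKronVec (B.mulVec (u t))).mulVec (x t)) t := by
  intro t
  have hcomp : ∀ i, HasDerivAt (fun s => x s i) ((A.mulVec (x t) + B.mulVec (u t)) i) t :=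
    fun i => (hasDerivAt_pi.mp (hx t)) i
  rw [hasDerivAt_pi]
  rintro ⟨i, j⟩
  have h : HasDerivAt (fun s => x s i * x s j) _ t := (hcomp i).mul (hcomp j)
  show HasDerivAt (fun s => x s i * x s j) _ t
  convert h using 1
  show _ = (A.mulVec (x t) + B.mulVec (u t)) i * x t j
      + x t i * (A.mulVec (x t) + B.mulVec (u t)) j
  simp only [kronSum, kronVec, vecKronId, idKronVec, Matrix.mulVec, Matrix.add_apply,
    Matrix.kroneckerMap_apply, Matrix.one_apply, Matrix.of_apply, dotProduct, Pi.add_apply,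
    Fintype.sum_prod_type, add_mul, mul_ite, mul_one, mul_zero, ite_mul, zero_mul, one_mul,
    Finset.sum_ite_irrel, Finset.sum_const_zero,
    Finset.sum_ite_eq, Finset.sum_ite_eq', Finset.mem_univ, if_true, Finset.sum_add_distrib]
  have e1 : ∑ k, A i k * (x t k * x t j) = (∑ k, A i k * x t k) * x t j := by
    rw [Finset.sum_mul]; exact Finset.sum_congr rfl fun k _ => by ring
  have e2 : ∑ k, A j k * (x t i * x t k) = x t i * ∑ k, A j k * x t k := by
    rw [Finset.mul_sum]; exact Finset.sum_congr rfl fun k _ => by ring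
  rw [e1, e2]; ring

end Quad
end

section
/- (Lemma 3) Let A ∈ ℝ^{n×n}, B ∈ ℝ^{n×p}, let u : ℝ → ℝ^p be a function, and let x : ℝ → ℝ^n be differentiable with ẋ(t) = A x(t) + B u(t) for all t ∈ ℝ. Set x^{[2]}(t) := D_nᵀ (x(t) ⊗ x(t)), Ā := D_nᵀ (A ⊕ A) (D_n⁺)ᵀ, and Ū(t) := D_nᵀ ((B u(t)) ⊗ I_n + I_n ⊗ (B u(t))). Then x^{[2]} is differentiable and, for every t, d/dt x^{[2]}(t) = Ā x^{[2]}(t) + Ū(t) x(t). -/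
open Matrix
open scoped Kronecker

namespace Quad

lemma symidx_eq {n : ℕ} (c c' : SymIdx n) (r : Fin n × Fin n)
    (h1 : r = c.1 ∨ r = (c.1.2, c.1.1)) (h2 : r = c'.1 ∨ r = (c'.1.2, c'.1.1)) :
    c = c' := by
  obtain ⟨⟨k, l⟩, hc⟩ := c
  obtain ⟨⟨k', l'⟩, hc'⟩ := c'
  simp only at h1 h2 hc hc'
  apply Subtype.ext
  have hcv : l.val ≤ k.val := hc
  have hcv' : l'.val ≤ k'.val := hc'
  rcases h1 with rfl | rfl <;>
    (simp only [Prod.mk.injEq, Fin.ext_iff] at h2 ⊢; omega)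

/-- `DᵀD` is diagonal with entries 1 (diagonal index) or 2. -/
lemma dupT_mul_dup (n : ℕ) :
    (dup n)ᵀ * dup n =
      Matrix.diagonal (fun c : SymIdx n => if c.1.1 = c.1.2 then (1 : ℝ) else 2) := by
  ext c c'
  simp only [Matrix.mul_apply, Matrix.transpose_apply, dup, Matrix.of_apply,
    Matrix.diagonal_apply]
  by_cases h : c = c'
  · subst h
    simp only [if_pos rfl]
    by_cases hd : c.1.1 = c.1.2
    · have hswap : ((c.1.2 : Fin n), c.1.1) = c.1 := by
        rw [Prod.ext_iff]; exact ⟨hd.symm, hd⟩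
      simp only [hswap, or_self, if_pos hd]
      have key : ∀ r : Fin n × Fin n,
          (if r = c.1 then (1:ℝ) else 0) * (if r = c.1 then (1:ℝ) else 0)
          = (if r = c.1 then (1:ℝ) else 0) := by
        intro r; split <;> simp
      rw [Finset.sum_congr rfl (fun r _ => key r),
        Finset.sum_ite_eq' Finset.univ c.1 (fun _ => (1:ℝ))]
      simp
    · have hne : c.1 ≠ (c.1.2, c.1.1) := by
        intro hh
        exact hd (by rw [Prod.ext_iff] at hh; exact hh.1)
      have key : ∀ r : Fin n × Fin n,
          (if r = c.1 ∨ r = (c.1.2, c.1.1) then (1:ℝ) else 0) *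
          (if r = c.1 ∨ r = (c.1.2, c.1.1) then (1:ℝ) else 0)
          = (if r = c.1 then (1:ℝ) else 0) + (if r = (c.1.2, c.1.1) then (1:ℝ) else 0) := by
        intro r
        by_cases h1 : r = c.1 <;> by_cases h2 : r = (c.1.2, c.1.1) <;>
          simp_all
      rw [Finset.sum_congr rfl (fun r _ => key r), Finset.sum_add_distrib,
        Finset.sum_ite_eq' Finset.univ c.1 (fun _ => (1:ℝ)),
        Finset.sum_ite_eq' Finset.univ (c.1.2, c.1.1) (fun _ => (1:ℝ))]
      simp [hd]
      norm_num
  · rw [if_neg h]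
    apply Finset.sum_eq_zero
    intro r _
    by_cases h1 : r = c.1 ∨ r = (c.1.2, c.1.1)
    · by_cases h2 : r = c'.1 ∨ r = (c'.1.2, c'.1.1)
      · exact absurd (symidx_eq c c' r h1 h2) h
      · simp [h2]
    · simp [h1]

lemma dupT_mul_dup_isUnit (n : ℕ) : IsUnit ((dup n)ᵀ * dup n).det := by
  rw [dupT_mul_dup, Matrix.det_diagonal]
  refine isUnit_iff_ne_zero.mpr (Finset.prod_ne_zero_iff.mpr ?_)
  intro c _
  by_cases h : c.1.1 = c.1.2 <;> simp [h]

/-- sorting an index pair -/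
def sortIdx {n : ℕ} (r : Fin n × Fin n) : SymIdx n :=
  if h : r.2 ≤ r.1 then ⟨r, h⟩ else ⟨(r.2, r.1), le_of_not_ge h⟩

lemma dup_mulVec_symm {n : ℕ} (v : Fin n × Fin n → ℝ)
    (hsym : ∀ i j, v (i, j) = v (j, i)) :
    (dup n).mulVec (fun c => v c.1) = v := by
  funext r
  rw [Matrix.mulVec, dotProduct]
  rw [Finset.sum_eq_single (sortIdx r)]
  · have hval : (sortIdx r).1 = r ∨ (sortIdx r).1 = (r.2, r.1) := by
      unfold sortIdx
      split <;> simp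
    have hone : dup n r (sortIdx r) = 1 := by
      unfold dup sortIdx
      split <;> simp
    rw [hone, one_mul]
    rcases hval with h | h
    · rw [h]
    · rw [h]; exact (hsym r.2 r.1).trans (by rw [Prod.mk.eta])
  · intro c _ hne
    have : dup n r c = 0 := by
      unfold dup
      rw [Matrix.of_apply, if_neg]
      intro hmem
      apply hne
      have hmem' : r = (sortIdx r).1 ∨ r = ((sortIdx r).1.2, (sortIdx r).1.1) := by
        unfold sortIdx
        split <;> simp
      exact symidx_eq c (sortIdx r) r hmem hmem'
    rw [this, zero_mul]
  · intro h
    exact absurd (Finset.mem_univ _) h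

/-- Key pseudo-inverse identity on symmetric vectors. -/
lemma dupPinvT_dupT {n : ℕ} (v : Fin n × Fin n → ℝ)
    (hsym : ∀ i j, v (i, j) = v (j, i)) :
    (dupPinv n)ᵀ.mulVec ((dup n)ᵀ.mulVec v) = v := by
  have hv : v = (dup n).mulVec (fun c => v c.1) := (dup_mulVec_symm v hsym).symm
  have hT : (dupPinv n)ᵀ = dup n * ((dup n)ᵀ * dup n)⁻¹ := by
    rw [dupPinv, Matrix.transpose_mul, Matrix.transpose_nonsing_inv,
      Matrix.transpose_mul, Matrix.transpose_transpose]
  rw [hT]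
  conv_lhs => rw [hv]
  rw [Matrix.mulVec_mulVec, Matrix.mulVec_mulVec, Matrix.mul_assoc,
    Matrix.mul_assoc, Matrix.nonsing_inv_mul _ (dupT_mul_dup_isUnit n), Matrix.mul_one]
  exact dup_mulVec_symm v hsym

lemma kron1_mulVec {n m : ℕ} (A : Matrix (Fin n) (Fin n) ℝ)
    (w : Fin n → ℝ) (v : Fin m → ℝ) :
    (A ⊗ₖ (1 : Matrix (Fin m) (Fin m) ℝ)).mulVec (kronVec w v)
      = kronVec (A.mulVec w) v := by
  funext r
  obtain ⟨i, j⟩ := r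
  simp only [Matrix.mulVec, dotProduct, Matrix.kroneckerMap_apply, kronVec,
    Fintype.sum_prod_type, Matrix.one_apply, mul_ite, ite_mul, mul_one, mul_zero,
    zero_mul, one_mul, Finset.sum_ite_eq, Finset.mem_univ, if_true, Finset.sum_mul]
  exact Finset.sum_congr rfl fun k _ => by ring

lemma one_kron_mulVec {n m : ℕ} (A : Matrix (Fin m) (Fin m) ℝ)
    (w : Fin n → ℝ) (v : Fin m → ℝ) :
    ((1 : Matrix (Fin n) (Fin n) ℝ) ⊗ₖ A).mulVec (kronVec w v)
      = kronVec w (A.mulVec v) := by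
  funext r
  obtain ⟨i, j⟩ := r
  simp only [Matrix.mulVec, dotProduct, Matrix.kroneckerMap_apply, kronVec,
    Fintype.sum_prod_type, Matrix.one_apply, mul_ite, ite_mul, mul_one, mul_zero,
    zero_mul, one_mul, Finset.sum_ite_eq, Finset.mem_univ, if_true, Finset.mul_sum]
  rw [Finset.sum_eq_single i]
  · exact Finset.sum_congr rfl fun l _ => by rw [if_pos rfl]; ring
  · intro b _ hb
    exact Finset.sum_eq_zero fun l _ => if_neg fun h => hb h.symm
  · intro h
    exact absurd (Finset.mem_univ _) h

lemma kronSum_mulVec_kronVec {n : ℕ} (A : Matrix (Fin n) (Fin n) ℝ) (w : Fin n → ℝ) :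
    (kronSum A A).mulVec (kronVec w w)
      = kronVec (A.mulVec w) w + kronVec w (A.mulVec w) := by
  rw [kronSum, Matrix.add_mulVec, kron1_mulVec, one_kron_mulVec]


lemma vecKronId_mulVec {n : ℕ} (w y : Fin n → ℝ) :
    (vecKronId w).mulVec y = kronVec w y := by
  funext r
  obtain ⟨i, j⟩ := r
  simp [vecKronId, Matrix.mulVec, dotProduct, kronVec, mul_ite, ite_mul, mul_one,
    mul_zero, zero_mul, mul_assoc, Finset.sum_ite_eq]

lemma idKronVec_mulVec {n : ℕ} (w y : Fin n → ℝ) :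
    (idKronVec w).mulVec y = kronVec y w := by
  funext r
  obtain ⟨i, j⟩ := r
  simp [idKronVec, Matrix.mulVec, dotProduct, kronVec, mul_ite, ite_mul, mul_one,
    mul_zero, zero_mul, mul_comm, Finset.sum_ite_eq]

/-- Lemma 3: with `x^{[2]} := D_nᵀ (x ⊗ x)`,
`Ā := D_nᵀ (A ⊕ A)(D_n⁺)ᵀ` and `Ū := D_nᵀ((Bu) ⊗ I_n + I_n ⊗ (Bu))`, along
`ẋ = Ax + Bu` one has `d/dt x^{[2]} = Ā x^{[2]} + Ū x`. -/
theorem hasDerivAt_xsq {n p : ℕ}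
    (A : Matrix (Fin n) (Fin n) ℝ) (B : Matrix (Fin n) (Fin p) ℝ)
    (u : ℝ → Fin p → ℝ) (x : ℝ → Fin n → ℝ)
    (hx : ∀ t, HasDerivAt x (A.mulVec (x t) + B.mulVec (u t)) t)
    (xsq : ℝ → SymIdx n → ℝ)
    (hxsq : ∀ t, xsq t = (dup n)ᵀ.mulVec (kronVec (x t) (x t)))
    (Ubar : ℝ → Matrix (SymIdx n) (Fin n) ℝ)
    (hUbar : ∀ t, Ubar t =
      (dup n)ᵀ * (vecKronId (B.mulVec (u t)) + idKronVec (B.mulVec (u t)))) :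
    ∀ t : ℝ, HasDerivAt xsq
      ((kronAbar A).mulVec (xsq t) + (Ubar t).mulVec (x t)) t := by
  intro t
  have hxfun : xsq = fun s => (dup n)ᵀ.mulVec (kronVec (x s) (x s)) := funext hxsq
  set x' : Fin n → ℝ := A.mulVec (x t) + B.mulVec (u t) with hx'
  have hxc : ∀ i, HasDerivAt (fun s => x s i) (x' i) t := fun i => hasDerivAt_pi.1 (hx t) i
  have hD : HasDerivAt xsq
      ((dup n)ᵀ.mulVec (fun r : Fin n × Fin n => x' r.1 * x t r.2 + x t r.1 * x' r.2)) t := by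
    rw [hxfun, hasDerivAt_pi]
    intro c
    simp only [Matrix.mulVec, dotProduct, kronVec]
    exact HasDerivAt.fun_sum fun r _ => ((hxc r.1).mul (hxc r.2)).const_mul _
  have hsymv : ∀ i j, kronVec (x t) (x t) (i, j) = kronVec (x t) (x t) (j, i) :=
    fun i j => mul_comm _ _
  have h1 : (kronAbar A).mulVec (xsq t)
      = (dup n)ᵀ.mulVec (kronVec (A.mulVec (x t)) (x t) + kronVec (x t) (A.mulVec (x t))) := by
    rw [hxsq t, kronAbar, ← Matrix.mulVec_mulVec, ← Matrix.mulVec_mulVec,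
      dupPinvT_dupT _ hsymv, kronSum_mulVec_kronVec]
  have h2 : (Ubar t).mulVec (x t)
      = (dup n)ᵀ.mulVec (kronVec (B.mulVec (u t)) (x t) + kronVec (x t) (B.mulVec (u t))) := by
    rw [hUbar t, ← Matrix.mulVec_mulVec, Matrix.add_mulVec, vecKronId_mulVec, idKronVec_mulVec]
  have heq : (kronAbar A).mulVec (xsq t) + (Ubar t).mulVec (x t)
      = (dup n)ᵀ.mulVec (fun r : Fin n × Fin n => x' r.1 * x t r.2 + x t r.1 * x' r.2) := by
    have harg : (kronVec (A.mulVec (x t)) (x t) + kronVec (x t) (A.mulVec (x t))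
        + (kronVec (B.mulVec (u t)) (x t) + kronVec (x t) (B.mulVec (u t))))
        = (fun r : Fin n × Fin n => x' r.1 * x t r.2 + x t r.1 * x' r.2) := by
      funext r
      simp only [kronVec, Pi.add_apply, hx']
      ring
    rw [h1, h2, ← Matrix.mulVec_add, harg]
  rw [heq]
  exact hD


end Quad
end
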